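/- Let a : ℕ → ℕ be injective and let ψ_k be as above (k ≥ 2) with ψ_k supported in [-3/(2k²), -1/(2k²)]. Define f(x) = Σ_{k=2}^∞ ψ_k(x - a(k)). Then the series converges uniformly on compact sets, f is continuous, and for every n ∈ ℕ: f'(n) = k·φ'(-1/2) if n = a(k) for some k ≥ 2, and f'(n) = 0 otherwise. -/

import Mathlib

open Filter

/-- The canonical bump function. -/
noncomputable def bumpFn (x : ℝ) : ℝ :=
  if |x| < 1 then Real.exp (-(x ^ 2) / (1 - x ^ 2)) else 0

/-- `ψ(x) = φ(x - 1/2)`. -/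
noncomputable def psiFn (x : ℝ) : ℝ := bumpFn (x - 1 / 2)

/-- `ψ_k(x) = (1/k)·ψ(k²x)`. -/
noncomputable def psik (k : ℕ) (x : ℝ) : ℝ := (1 / k) * psiFn (k ^ 2 * x)

/-- The `k`-th summand `ψ_k(x - a(k))` (only for `k ≥ 2`). -/
noncomputable def summand (a : ℕ → ℕ) (k : ℕ) (x : ℝ) : ℝ :=
  if 2 ≤ k then psik k (x - a k) else 0

/-- `f(x) = ∑_{k=2}^∞ ψ_k(x - a(k))`. -/
noncomputable def PRfun (a : ℕ → ℕ) (x : ℝ) : ℝ := ∑' k, summand a k x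

lemma bumpFn_eq (x : ℝ) : bumpFn x = Real.exp 1 * expNegInvGlue (1 - x ^ 2) := by
  unfold bumpFn expNegInvGlue
  rcases lt_or_ge (|x|) 1 with h | h
  · have hx : 0 < 1 - x ^ 2 := by nlinarith [abs_nonneg x, sq_abs x]
    rw [if_pos h, if_neg (not_le.2 hx), ← Real.exp_add]
    congr 1
    field_simp
    ring
  · have hx : 1 - x ^ 2 ≤ 0 := by nlinarith [sq_abs x]
    rw [if_neg (not_lt.2 h), if_pos hx, mul_zero]

lemma bumpFn_smooth : ContDiff ℝ (1 : ℕ∞) bumpFn := by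
  have h : bumpFn = fun x => Real.exp 1 * expNegInvGlue (1 - x ^ 2) := funext bumpFn_eq
  rw [h]
  have h2 : ContDiff ℝ (1 : ℕ∞) (fun x : ℝ => 1 - x ^ 2) := contDiff_const.sub (contDiff_id.pow 2)
  exact contDiff_const.mul (expNegInvGlue.contDiff.comp h2)

lemma bumpFn_ne (x : ℝ) (h : ¬ |x| < 1) : bumpFn x = 0 := if_neg h

lemma summand_support {a : ℕ → ℕ} {k : ℕ} {x : ℝ} (h : summand a k x ≠ 0) :
    2 ≤ k ∧ |x - a k| < 1 / 2 := by
  unfold summand at h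
  by_cases hk : 2 ≤ k
  · refine ⟨hk, ?_⟩
    rw [if_pos hk] at h
    unfold psik psiFn at h
    have hb : bumpFn ((k : ℝ) ^ 2 * (x - a k) - 1 / 2) ≠ 0 := fun h0 => h (by rw [h0, mul_zero])
    have habs : |(k : ℝ) ^ 2 * (x - a k) - 1 / 2| < 1 := by
      by_contra hc
      exact hb (bumpFn_ne _ hc)
    have hk4 : (4 : ℝ) ≤ (k : ℝ) ^ 2 := by
      have : (2 : ℝ) ≤ (k : ℝ) := by exact_mod_cast hk
      nlinarith
    rw [abs_lt] at habs ⊢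
    obtain ⟨h1, h2⟩ := habs
    constructor
    · by_contra hc
      push_neg at hc
      nlinarith
    · by_contra hc
      push_neg at hc
      nlinarith
  · rw [if_neg hk] at h
    exact absurd rfl h

lemma summand_continuous (a : ℕ → ℕ) (k : ℕ) : Continuous (summand a k) := by
  unfold summand
  by_cases hk : 2 ≤ k
  · simp only [if_pos hk]
    unfold psik psiFn
    exact continuous_const.mul ((bumpFn_smooth.continuous).comp (by fun_prop))
  · simp only [if_neg hk]
    exact continuous_const

lemma finite_idx (a : ℕ → ℕ) (ha : Function.Injective a) (m : ℕ) :
    {k | a k ≤ m}.Finite :=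
  Set.Finite.preimage ha.injOn (Set.finite_Iic m)

lemma nat_eq_of_abs_lt {p q : ℕ} (h : |(p : ℝ) - q| < 1) : p = q := by
  rw [abs_lt] at h
  obtain ⟨h1, h2⟩ := h
  have l1 : (p : ℝ) < q + 1 := by linarith
  have l2 : (q : ℝ) < p + 1 := by linarith
  have m1 : p < q + 1 := by exact_mod_cast l1
  have m2 : q < p + 1 := by exact_mod_cast l2
  omega

lemma eventually_single (a : ℕ → ℕ) (ha : Function.Injective a) {n k : ℕ}
    (hk : 2 ≤ k) (hn : n = a k) : PRfun a =ᶠ[nhds (n : ℝ)] summand a k := by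
  apply Filter.eventuallyEq_of_mem (Ioo_mem_nhds (show (n:ℝ) - 1/2 < n by linarith)
    (show (n:ℝ) < n + 1/2 by linarith))
  intro x hx
  unfold PRfun
  apply tsum_eq_single
  intro j hj
  by_contra hne
  obtain ⟨hj2, habs⟩ := summand_support hne
  have hxn : |x - (n:ℝ)| < 1/2 := by
    rw [abs_lt]; exact ⟨by linarith [hx.1], by linarith [hx.2]⟩
  have : |(a j : ℝ) - n| < 1 := by
    have := abs_sub_abs_le_abs_sub (x - n) (x - (a j : ℝ))
    calc |(a j : ℝ) - n| = |(x - n) - (x - a j)| := by ring_nf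
      _ ≤ |x - n| + |x - a j| := by
          rw [sub_eq_add_neg]
          exact (abs_add_le _ _).trans (by rw [abs_neg])
      _ < 1 := by linarith
  have : a j = n := nat_eq_of_abs_lt this
  exact hj (ha (by rw [this, hn]))

lemma eventually_zero (a : ℕ → ℕ) {n : ℕ} (h : ∀ k, 2 ≤ k → n ≠ a k) :
    PRfun a =ᶠ[nhds (n : ℝ)] 0 := by
  apply Filter.eventuallyEq_of_mem (Ioo_mem_nhds (show (n:ℝ) - 1/2 < n by linarith)
    (show (n:ℝ) < n + 1/2 by linarith))
  intro x hx
  unfold PRfun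
  have : ∀ j, summand a j x = 0 := by
    intro j
    by_contra hne
    obtain ⟨hj2, habs⟩ := summand_support hne
    have hxn : |x - (n:ℝ)| < 1/2 := by
      rw [abs_lt]; exact ⟨by linarith [hx.1], by linarith [hx.2]⟩
    have h1 : |(a j : ℝ) - n| < 1 := by
      calc |(a j : ℝ) - n| = |(x - n) - (x - a j)| := by ring_nf
        _ ≤ |x - n| + |x - a j| := by
            rw [sub_eq_add_neg]
            exact (abs_add_le _ _).trans (by rw [abs_neg])
        _ < 1 := by linarith
    exact h j hj2 (nat_eq_of_abs_lt h1).symm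
  simp only [Pi.zero_apply]
  rw [tsum_congr this, tsum_zero]

lemma hasDerivAt_summand (a : ℕ → ℕ) (k : ℕ) (hk : 2 ≤ k) :
    HasDerivAt (summand a k) (k * deriv bumpFn (-(1 / 2))) (a k : ℝ) := by
  have hfun : summand a k = fun x => (1 / (k:ℝ)) * bumpFn ((k:ℝ)^2 * (x - a k) - 1/2) := by
    funext x
    unfold summand psik psiFn
    rw [if_pos hk]
  rw [hfun]
  have hb : HasDerivAt bumpFn (deriv bumpFn (-(1/2))) (-(1/2)) :=
    ((bumpFn_smooth.differentiable (by simp)) _).hasDerivAt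
  have hin : HasDerivAt (fun x : ℝ => (k:ℝ)^2 * (x - a k) - 1/2) ((k:ℝ)^2) (a k : ℝ) := by
    have : HasDerivAt (fun x : ℝ => x - (a k:ℝ)) 1 (a k : ℝ) := (hasDerivAt_id _).sub_const _
    simpa using (this.const_mul ((k:ℝ)^2)).sub_const (1/2)
  have hval : (k:ℝ)^2 * ((a k : ℝ) - a k) - 1/2 = -(1/2) := by ring
  have hcomp : HasDerivAt (fun x => bumpFn ((k:ℝ)^2 * (x - a k) - 1/2))
      (deriv bumpFn (-(1/2)) * (k:ℝ)^2) (a k : ℝ) := by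
    have := (hval ▸ hb).comp (a k : ℝ) hin
    simpa [Function.comp_def] using this
  have := hcomp.const_mul (1 / (k:ℝ))
  have hkne : (k:ℝ) ≠ 0 := by positivity
  have harith : 1 / (k:ℝ) * (deriv bumpFn (-(1/2)) * (k:ℝ)^2) = k * deriv bumpFn (-(1/2)) := by
    field_simp
  rwa [harith] at this

theorem stmt_6 (a : ℕ → ℕ) (ha : Function.Injective a) :
    (∀ K : Set ℝ, IsCompact K →
      TendstoUniformlyOn (fun N x => ∑ k ∈ Finset.range N, summand a k x)
        (PRfun a) Filter.atTop K) ∧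
    Continuous (PRfun a) ∧
    (∀ n : ℕ,
      (∀ k : ℕ, 2 ≤ k → n = a k → deriv (PRfun a) n = k * deriv bumpFn (-(1 / 2))) ∧
      ((∀ k : ℕ, 2 ≤ k → n ≠ a k) → deriv (PRfun a) n = 0)) := by
  have part1 : ∀ K : Set ℝ, IsCompact K →
      TendstoUniformlyOn (fun N x => ∑ k ∈ Finset.range N, summand a k x)
        (PRfun a) Filter.atTop K := by
    intro K hK
    obtain ⟨r, hr⟩ := hK.isBounded.subset_closedBall 0
    set m : ℕ := ⌈r⌉₊ + 1 with hm
    obtain ⟨N₀, hN₀⟩ := (finite_idx a ha m).bddAbove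
    have key : ∀ N, N₀ + 1 ≤ N → ∀ x ∈ K,
        PRfun a x = ∑ k ∈ Finset.range N, summand a k x := by
      intro N hN x hx
      unfold PRfun
      apply tsum_eq_sum
      intro j hj
      by_contra hne
      obtain ⟨hj2, habs⟩ := summand_support hne
      have hxr : |x| ≤ r := by
        have := hr hx
        rwa [Metric.mem_closedBall, Real.dist_eq, sub_zero] at this
      have haj : (a j : ℝ) ≤ r + 1/2 := by
        have h1 : (a j : ℝ) - x ≤ |x - (a j : ℝ)| := by
          rw [abs_sub_comm]; exact le_abs_self _
        have h2 := abs_le.1 hxr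
        linarith
      have hajm : a j ≤ m := by
        have hrm : r ≤ (⌈r⌉₊ : ℝ) := Nat.le_ceil r
        have : (a j : ℝ) ≤ (m : ℝ) := by
          rw [hm]; push_cast; linarith
        exact_mod_cast this
      have hjN : j ≤ N₀ := hN₀ hajm
      have : N ≤ j := by simpa using hj
      omega
    rw [Metric.tendstoUniformlyOn_iff]
    intro ε hε
    filter_upwards [Filter.eventually_ge_atTop (N₀ + 1)] with N hN x hx
    rw [key N hN x hx]
    simpa using hε
  have part2 : Continuous (PRfun a) := by
    rw [continuous_iff_continuousAt]
    intro x₀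
    have h1 := part1 (Metric.closedBall x₀ 1) (isCompact_closedBall x₀ 1)
    have h2 : ContinuousOn (PRfun a) (Metric.closedBall x₀ 1) := by
      apply h1.continuousOn
      apply Filter.Eventually.frequently
      filter_upwards with N
      exact (continuous_finset_sum _ (fun k _ => summand_continuous a k)).continuousOn
    exact h2.continuousAt (Metric.closedBall_mem_nhds x₀ one_pos)
  refine ⟨part1, part2, fun n => ⟨?_, ?_⟩⟩
  · intro k hk hn
    rw [(eventually_single a ha hk hn).deriv_eq, hn]
    exact (hasDerivAt_summand a k hk).deriv
  · intro h
    rw [(eventually_zero a h).deriv_eq]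
    exact deriv_const _ _
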